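/- Let V be an (MN)×(MN) unitary matrix, indexed by pairs ((i,k),(j,l)) with i,j ∈ {1,…,M} and k,l ∈ {1,…,N}, and let Ṽ be its realignment, the M²×N² matrix with entries Ṽ_{(i,j),(k,l)} = V_{(i,k),(j,l)}. Then rank(Ṽ) = 1 if and only if there exist an M×M matrix U1, an N×N matrix U2 and a real number k > 0 such that V = U1⊗U2 (Kronecker product), U1·U1† = U1†·U1 = k⁻¹·I_M and U2·U2† = U2†·U2 = k·I_N. In particular, if V is a unitary tensor decomposable matrix then rank(Ṽ) = 1. -/

import Mathlib

open Matrix Kronecker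

/-- The realignment `Ṽ` of a matrix `V` on `ℂᴹ ⊗ ℂᴺ`: the `M²×N²` matrix with
entries `Ṽ_{(i,j),(k,l)} = V_{(i,k),(j,l)}`. -/
def realign (M N : ℕ) (V : Matrix (Fin M × Fin N) (Fin M × Fin N) ℂ) :
    Matrix (Fin M × Fin M) (Fin N × Fin N) ℂ :=
  Matrix.of fun p q => V (p.1, q.1) (p.2, q.2)

section aux

variable {m n : Type*} [Fintype m] [Fintype n] [DecidableEq m] [DecidableEq n]

lemma aux_rank_vecMulVec_ne_zero (x : m → ℂ) (y : n → ℂ)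
    (hx : x ≠ 0) (hy : y ≠ 0) : (Matrix.vecMulVec x y).rank = 1 := by
  have hle : (Matrix.vecMulVec x y).rank ≤ 1 := by
    rw [Matrix.vecMulVec_eq (Fin 1)]
    exact le_trans (Matrix.rank_mul_le_left _ _)
      (by exact (Matrix.rank_le_card_width (Matrix.replicateCol (Fin 1) x)).trans_eq (Fintype.card_fin 1))
  have hne : (Matrix.vecMulVec x y).rank ≠ 0 := by
    intro h0
    obtain ⟨i, hi⟩ := Function.ne_iff.mp hx
    obtain ⟨j, hj⟩ := Function.ne_iff.mp hy
    have h0' : LinearMap.range (Matrix.vecMulVec x y).mulVecLin = ⊥ :=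
      Submodule.finrank_eq_zero.mp (by rwa [Matrix.rank] at h0)
    have hmem := LinearMap.mem_range_self (Matrix.vecMulVec x y).mulVecLin (Pi.single j 1)
    rw [h0', Submodule.mem_bot] at hmem
    have := congrFun hmem i
    simp [Matrix.mulVecLin_apply, Matrix.mulVec_single, Matrix.vecMulVec_apply] at this
    tauto
  omega

lemma aux_rank_one_factor (A : Matrix m n ℂ) (hA : A.rank = 1) :
    ∃ x y, A = Matrix.vecMulVec x y := by
  rw [Matrix.rank, finrank_eq_one_iff'] at hA
  obtain ⟨⟨v, hvmem⟩, hv0, hv⟩ := hA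
  choose c hc using fun j =>
    hv ⟨A.mulVecLin (Pi.single j 1), LinearMap.mem_range_self _ _⟩
  refine ⟨v, c, ?_⟩
  ext i j
  have h1 := congrFun (congrArg Subtype.val (hc j)) i
  simp only [Submodule.coe_smul, Pi.smul_apply, smul_eq_mul] at h1
  have h2 : A.mulVecLin (Pi.single j 1) i = A i j := by
    simp [Matrix.mulVecLin_apply, Matrix.mulVec_single]
  rw [Matrix.vecMulVec_apply, mul_comm]
  exact h2.symm.trans h1.symm

lemma aux_kronecker_eq_one {A : Matrix m m ℂ} {B : Matrix n n ℂ}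
    [Nonempty m] [Nonempty n] (h : A ⊗ₖ B = 1) :
    ∃ a : ℂ, a ≠ 0 ∧ A = a • 1 ∧ B = a⁻¹ • 1 := by
  have key : ∀ i j k l, A i j * B k l = if i = j ∧ k = l then 1 else 0 := by
    intro i j k l
    have := congrFun (congrFun h (i, k)) (j, l)
    simpa [Matrix.one_apply, Prod.ext_iff] using this
  obtain ⟨i0⟩ := ‹Nonempty m›
  obtain ⟨k0⟩ := ‹Nonempty n›
  set a := A i0 i0 with ha
  have h1 : a * B k0 k0 = 1 := by simpa using key i0 i0 k0 k0
  have ha0 : a ≠ 0 := left_ne_zero_of_mul_eq_one h1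
  have hB00 : B k0 k0 = a⁻¹ := by field_simp at h1 ⊢; linear_combination h1
  refine ⟨a, ha0, ?_, ?_⟩
  · ext i j
    have := key i j k0 k0
    rw [hB00] at this
    rcases eq_or_ne i j with rfl | hij
    · simp only [and_self, if_pos rfl, ↓reduceIte] at this
      have : A i i = a := by field_simp at this; linear_combination this
      simp [this, Matrix.one_apply]
    · rw [if_neg (fun hc => hij hc.1)] at this
      have : A i j = 0 := by
        rcases mul_eq_zero.mp this with h | h
        · exact h
        · exact absurd h (inv_ne_zero ha0)
      simp [this, Matrix.one_apply, hij]
  · ext k l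
    have := key i0 i0 k l
    simp only [true_and, ← ha] at this
    rcases eq_or_ne k l with rfl | hkl
    · rw [if_pos rfl] at this
      have : B k k = a⁻¹ := by field_simp at this ⊢; linear_combination this
      simp [this, Matrix.one_apply]
    · rw [if_neg hkl] at this
      have : B k l = 0 := by
        rcases mul_eq_zero.mp this with h | h
        · exact absurd h ha0
        · exact h
      simp [this, Matrix.one_apply, hkl]

lemma aux_kronecker_conjTranspose (A : Matrix m m ℂ) (B : Matrix n n ℂ) :
    (A ⊗ₖ B)ᴴ = Aᴴ ⊗ₖ Bᴴ := by
  ext ⟨i, k⟩ ⟨j, l⟩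
  simp [Matrix.conjTranspose_apply, Matrix.kroneckerMap_apply, star_mul', mul_comm]

lemma aux_realign_kronecker {M N : ℕ} (A : Matrix (Fin M) (Fin M) ℂ)
    (B : Matrix (Fin N) (Fin N) ℂ) :
    realign M N (A ⊗ₖ B) =
      Matrix.vecMulVec (fun p => A p.1 p.2) (fun q => B q.1 q.2) := by
  ext ⟨i, j⟩ ⟨k, l⟩
  rfl

lemma aux_rank_realign_kronecker {M N : ℕ} {A : Matrix (Fin M) (Fin M) ℂ}
    {B : Matrix (Fin N) (Fin N) ℂ} (hA : A ≠ 0) (hB : B ≠ 0) :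
    (realign M N (A ⊗ₖ B)).rank = 1 := by
  rw [aux_realign_kronecker]
  refine aux_rank_vecMulVec_ne_zero _ _ ?_ ?_
  · intro h
    apply hA
    ext i j
    exact congrFun h (i, j)
  · intro h
    apply hB
    ext k l
    exact congrFun h (k, l)

end aux

/-- For an `MN×MN` unitary matrix `V`, the realignment `Ṽ` has rank one iff
`V = U1 ⊗ U2` with `U1·U1† = U1†·U1 = k⁻¹·I` and `U2·U2† = U2†·U2 = k·I` for some
`k > 0`. In particular, a unitary tensor decomposable matrix has `rank(Ṽ) = 1`. -/
theorem unitary_realign_rank_one (M N : ℕ) (hM : 0 < M) (hN : 0 < N)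
    (V : Matrix (Fin M × Fin N) (Fin M × Fin N) ℂ)
    (hV : V ∈ Matrix.unitaryGroup (Fin M × Fin N) ℂ) :
    ((realign M N V).rank = 1 ↔
      ∃ (U1 : Matrix (Fin M) (Fin M) ℂ) (U2 : Matrix (Fin N) (Fin N) ℂ) (k : ℝ),
        0 < k ∧ V = U1 ⊗ₖ U2 ∧
        U1 * U1ᴴ = ((k : ℂ)⁻¹) • 1 ∧ U1ᴴ * U1 = ((k : ℂ)⁻¹) • 1 ∧
        U2 * U2ᴴ = (k : ℂ) • 1 ∧ U2ᴴ * U2 = (k : ℂ) • 1) ∧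
    (∀ (W1 : Matrix (Fin M) (Fin M) ℂ) (W2 : Matrix (Fin N) (Fin N) ℂ),
        W1 ∈ Matrix.unitaryGroup (Fin M) ℂ → W2 ∈ Matrix.unitaryGroup (Fin N) ℂ →
        V = W1 ⊗ₖ W2 → (realign M N V).rank = 1) := by
  haveI : Nonempty (Fin M) := ⟨⟨0, hM⟩⟩
  haveI : Nonempty (Fin N) := ⟨⟨0, hN⟩⟩
  have hVV' : V * Vᴴ = 1 := (Matrix.mem_unitaryGroup_iff).mp hV
  have hV'V : Vᴴ * V = 1 := (Matrix.mem_unitaryGroup_iff').mp hV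
  constructor
  · constructor
    · -- forward direction
      intro hrank
      obtain ⟨x, y, hxy⟩ := aux_rank_one_factor _ hrank
      set U1 : Matrix (Fin M) (Fin M) ℂ := Matrix.of fun i j => x (i, j) with hU1
      set U2 : Matrix (Fin N) (Fin N) ℂ := Matrix.of fun k l => y (k, l) with hU2
      have hVdecomp : V = U1 ⊗ₖ U2 := by
        ext ⟨i, k⟩ ⟨j, l⟩
        have := congrFun (congrFun hxy (i, j)) (k, l)
        simpa [realign, Matrix.vecMulVec_apply, hU1, hU2] using this
      -- From V Vᴴ = 1
      have h1 : (U1 * U1ᴴ) ⊗ₖ (U2 * U2ᴴ) = 1 := by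
        rw [Matrix.mul_kronecker_mul, ← aux_kronecker_conjTranspose, ← hVdecomp, hVV']
      obtain ⟨a, ha0, hA1, hA2⟩ := aux_kronecker_eq_one h1
      -- From Vᴴ V = 1
      have h2 : (U1ᴴ * U1) ⊗ₖ (U2ᴴ * U2) = 1 := by
        rw [Matrix.mul_kronecker_mul, ← aux_kronecker_conjTranspose, ← hVdecomp, hV'V]
      obtain ⟨b, hb0, hB1, hB2⟩ := aux_kronecker_eq_one h2
      -- b = a via trace
      have htr : Matrix.trace (U1 * U1ᴴ) = Matrix.trace (U1ᴴ * U1) :=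
        Matrix.trace_mul_comm _ _
      rw [hA1, hB1, Matrix.trace_smul, Matrix.trace_smul, Matrix.trace_one] at htr
      have hMne : (Fintype.card (Fin M) : ℂ) ≠ 0 := by
        simp [Fintype.card_fin]; omega
      have hab : a = b := by
        have := htr
        simp only [smul_eq_mul] at this
        exact mul_right_cancel₀ hMne this
      -- a is real and positive
      have hadiag := congrFun (congrFun hA1 (Classical.arbitrary (Fin M)))
        (Classical.arbitrary (Fin M))
      set i0 := Classical.arbitrary (Fin M)
      have haval : a = ∑ j, Complex.normSq (U1 i0 j) := by
        have : (U1 * U1ᴴ) i0 i0 = ∑ j, (U1 i0 j) * (starRingEnd ℂ) (U1 i0 j) := by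
          simp [Matrix.mul_apply, Matrix.conjTranspose_apply]
        rw [hA1] at this
        simp only [Matrix.smul_apply, Matrix.one_apply_eq, smul_eq_mul, mul_one] at this
        rw [this]
        push_cast
        congr 1
        ext j
        rw [Complex.mul_conj]
      set r : ℝ := ∑ j, Complex.normSq (U1 i0 j) with hr
      have hrpos : 0 < r := by
        rcases lt_or_eq_of_le (Finset.sum_nonneg fun j _ => Complex.normSq_nonneg (U1 i0 j)) with h | h
        · exact h
        · exfalso; apply ha0; rw [haval]; exact_mod_cast hr.trans h.symm
      refine ⟨U1, U2, r⁻¹, by positivity, hVdecomp, ?_, ?_, ?_, ?_⟩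
      · rw [hA1, haval]; norm_num
      · rw [hB1, ← hab, haval]; norm_num
      · rw [hA2, haval]; norm_num
      · rw [hB2, ← hab, haval]; norm_num
    · -- reverse direction
      rintro ⟨U1, U2, k, hk, hVdecomp, hU1a, hU1b, hU2a, hU2b⟩
      rw [hVdecomp]
      refine aux_rank_realign_kronecker ?_ ?_
      · intro h
        have := congrFun (congrFun hU1a (Classical.arbitrary (Fin M)))
          (Classical.arbitrary (Fin M))
        rw [h] at this
        simp [Matrix.one_apply_eq, hk.ne'] at this
        exact hk.ne' (by exact_mod_cast this.symm)
      · intro h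
        have := congrFun (congrFun hU2a (Classical.arbitrary (Fin N)))
          (Classical.arbitrary (Fin N))
        rw [h] at this
        simp [Matrix.one_apply_eq, hk.ne'] at this
        exact hk.ne' (by exact_mod_cast this.symm)
  · -- in particular
    intro W1 W2 hW1 hW2 hVdecomp
    rw [hVdecomp]
    refine aux_rank_realign_kronecker ?_ ?_
    · intro h
      have h1 : W1 * (star W1) = 1 := (Matrix.mem_unitaryGroup_iff).mp hW1
      rw [h, zero_mul] at h1
      have := congrFun (congrFun h1 (Classical.arbitrary (Fin M)))
        (Classical.arbitrary (Fin M))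
      simp [Matrix.one_apply_eq] at this
    · intro h
      have h1 : W2 * (star W2) = 1 := (Matrix.mem_unitaryGroup_iff).mp hW2
      rw [h, zero_mul] at h1
      have := congrFun (congrFun h1 (Classical.arbitrary (Fin N)))
        (Classical.arbitrary (Fin N))
      simp [Matrix.one_apply_eq] at this
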